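/- Let M be a monoid, A a commutative monoid, and φ : M →* Monoid.End A a monoid homomorphism such that φ m : A → A is surjective for every m : M. Let F_φ : SingleObj M ⥤ Cat be the functor sending the unique object of SingleObj M to Cat.of (SingleObj A) and sending each endomorphism m : M to the endofunctor of SingleObj A induced by φ m. Then, in the endomorphism monoid of the unique object of the Grothendieck construction Grothendieck F_φ, the submonoid generated by the set of endomorphisms whose base component is the identity of M together with the set of endomorphisms whose fiber component is the identity of A is the whole endomorphism monoid. -/

import Mathlib

open CategoryTheory

/-- The functor `SingleObj M ⥤ Cat` sending the unique object to `Cat.of (SingleObj A)`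
and each `m : M` to the endofunctor of `SingleObj A` induced by the monoid endomorphism
`φ m` of `A`. -/
def monoidActionFunctor {M A : Type*} [Monoid M] [CommMonoid A] (φ : M →* Monoid.End A) :
    SingleObj M ⥤ Cat where
  obj _ := Cat.of (SingleObj A)
  map m := (SingleObj.mapHom A A (φ m)).toCatHom
  map_id _ := by
    show (SingleObj.mapHom A A (φ 1)).toCatHom = _
    rw [map_one]
    rfl
  map_comp f g := by
    show (SingleObj.mapHom A A (φ (g * f))).toCatHom = _
    rw [map_mul]
    rfl

theorem grothendieck_end_generated_by_globular_and_identity_squares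
    {M A : Type*} [Monoid M] [CommMonoid A] (φ : M →* Monoid.End A)
    (hsurj : ∀ m : M, Function.Surjective (φ m)) :
    Submonoid.closure
      ({ f : End ({ base := SingleObj.star M, fiber := SingleObj.star A } :
            Grothendieck (monoidActionFunctor φ)) | f.base = 𝟙 (SingleObj.star M) } ∪
        { f | f.fiber = 𝟙 (SingleObj.star A) }) = ⊤ := by
  rw [eq_top_iff]
  rintro f -
  obtain ⟨b, hb⟩ := hsurj f.base f.fiber
  let X : Grothendieck (monoidActionFunctor φ) :=
    { base := SingleObj.star M, fiber := SingleObj.star A }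
  let g : X ⟶ X := { base := 𝟙 _, fiber := b }
  let h : X ⟶ X := { base := f.base, fiber := 𝟙 _ }
  have hf : f = g ≫ h := by
    apply Grothendieck.ext
    · show eqToHom _ ≫ f.fiber = eqToHom _ ≫ (SingleObj.mapHom A A (φ f.base)).toCatHom.toFunctor.map b ≫ 𝟙 _
      simp only [eqToHom_refl, Category.id_comp, Category.comp_id]
      exact congrArg _ hb.symm
    · show f.base = 𝟙 _ ≫ f.base
      simp
  rw [hf]
  exact Submonoid.mul_mem _
    (Submonoid.subset_closure (Or.inr rfl))
    (Submonoid.subset_closure (Or.inl rfl))
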